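/- Let D be a locally convex subset of a normed space X and f : D → ℝ a function. Then the upper Baire functions of lip f and of Lip f both equal 𝕃ip f: (lip f)^∨ = (Lip f)^∨ = 𝕃ip f on D. -/

import Mathlib

open Metric Filter ENNReal Topology

private lemma chain_aux {X : Type*} [NormedAddCommGroup X] [NormedSpace ℝ X]
    {V : Set X} (hV : Convex ℝ V) (f : X → ℝ) {c c' : ℝ} (hc : 0 < c) (hcc' : c < c')
    (H : ∀ w ∈ V, ∀ δ : ℝ, 0 < δ → ∃ r, 0 < r ∧ r < δ ∧
        ∀ w' ∈ V, dist w' w < r → dist (f w') (f w) ≤ c * r)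
    {u v : X} (hu : u ∈ V) (hv : v ∈ V) :
    dist (f v) (f u) ≤ c' * dist u v := by
  rcases eq_or_ne u v with rfl | huv
  · simp
  have hc' : 0 < c' := hc.trans hcc'
  set d := dist u v with hd
  have hd0 : 0 < d := dist_pos.mpr huv
  set γ : ℝ → X := fun t => u + t • (v - u) with hγ
  have hγ0 : γ 0 = u := by simp [hγ]
  have hγ1 : γ 1 = v := by simp [hγ]
  have hγV : ∀ t ∈ Set.Icc (0:ℝ) 1, γ t ∈ V := fun t ht => hV.add_smul_sub_mem hu hv ht
  have hγd : ∀ s t : ℝ, dist (γ s) (γ t) = |s - t| * d := by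
    intro s t
    have h1 : γ s - γ t = (s - t) • (v - u) := by
      simp only [hγ, sub_smul]
      abel
    rw [dist_eq_norm, h1, norm_smul, Real.norm_eq_abs, hd, dist_eq_norm, norm_sub_rev]
  set A := {t : ℝ | t ∈ Set.Icc (0:ℝ) 1 ∧ dist (f (γ t)) (f u) ≤ c' * (t * d)} with hA
  have h0 : (0:ℝ) ∈ A := by
    refine ⟨⟨le_rfl, zero_le_one⟩, ?_⟩
    simp [hγ0]
  have hne : A.Nonempty := ⟨0, h0⟩
  have hbdd : BddAbove A := ⟨1, fun t ht => ht.1.2⟩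
  set T := sSup A with hT
  have hT0 : 0 ≤ T := le_csSup hbdd h0
  have hT1 : T ≤ 1 := csSup_le hne fun t ht => ht.1.2
  have hTA : dist (f (γ T)) (f u) ≤ c' * (T * d) := by
    refine le_of_forall_pos_le_add ?_
    intro ε hε
    obtain ⟨r, hr0, hrδ, hr⟩ := H (γ T) (hγV T ⟨hT0, hT1⟩) (ε / c) (by positivity)
    have hrd : (0:ℝ) < r / d := by positivity
    obtain ⟨t, htA, htgt⟩ := exists_lt_of_lt_csSup hne (by linarith : T - r / d < T)
    have htT : t ≤ T := le_csSup hbdd htA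
    have hdist : dist (γ t) (γ T) < r := by
      rw [hγd, abs_sub_comm, abs_of_nonneg (by linarith)]
      rw [sub_lt_iff_lt_add] at htgt
      calc (T - t) * d < (r / d) * d := by
              apply mul_lt_mul_of_pos_right _ hd0
              linarith
        _ = r := div_mul_cancel₀ _ hd0.ne'
    have h1 : dist (f (γ t)) (f (γ T)) ≤ c * r := hr (γ t) (hγV t htA.1) hdist
    have hcr : c * r < ε := by
      calc c * r < c * (ε / c) := by exact mul_lt_mul_of_pos_left hrδ hc
        _ = ε := mul_div_cancel₀ _ hc.ne'
    calc dist (f (γ T)) (f u) ≤ dist (f (γ T)) (f (γ t)) + dist (f (γ t)) (f u) :=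
          dist_triangle _ _ _
      _ ≤ c * r + c' * (t * d) := by
          rw [dist_comm]
          exact add_le_add h1 htA.2
      _ ≤ c' * (T * d) + ε := by
          have h4 : t * d ≤ T * d := mul_le_mul_of_nonneg_right htT hd0.le
          have h5 : c' * (t * d) ≤ c' * (T * d) := mul_le_mul_of_nonneg_left h4 hc'.le
          linarith
  have hT1' : T = 1 := by
    by_contra hne1
    have hTlt : T < 1 := lt_of_le_of_ne hT1 hne1
    obtain ⟨r, hr0, hrδ, hr⟩ := H (γ T) (hγV T ⟨hT0, hT1⟩) ((1 - T) * d * (c' / c))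
      (mul_pos (mul_pos (by linarith) hd0) (by positivity))
    set s := T + (c / c') * r / d with hs
    have hpos : 0 < (c / c') * r / d := by positivity
    have hsT : T < s := by rw [hs]; linarith
    have hs1 : s ≤ 1 := by
      have h2 : (c / c') * r / d < 1 - T := by
        rw [div_lt_iff₀ hd0]
        have := mul_lt_mul_of_pos_left hrδ (show (0:ℝ) < c / c' by positivity)
        calc c / c' * r < c / c' * ((1 - T) * d * (c' / c)) := this
          _ = (1 - T) * d := by field_simp
      rw [hs]; linarith
    have hsV : γ s ∈ V := hγV s ⟨by linarith, hs1⟩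
    have hdist : dist (γ s) (γ T) < r := by
      rw [hγd]
      have h3 : |s - T| = (c / c') * r / d := by
        rw [hs]; rw [add_sub_cancel_left, abs_of_pos hpos]
      rw [h3, div_mul_cancel₀ _ hd0.ne']
      calc (c / c') * r < 1 * r := by
            apply mul_lt_mul_of_pos_right _ hr0
            exact (div_lt_one hc').mpr hcc'
        _ = r := one_mul r
    have h1 : dist (f (γ s)) (f (γ T)) ≤ c * r := hr _ hsV hdist
    have hsA : s ∈ A := by
      refine ⟨⟨by linarith, hs1⟩, ?_⟩
      calc dist (f (γ s)) (f u) ≤ dist (f (γ s)) (f (γ T)) + dist (f (γ T)) (f u) :=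
            dist_triangle _ _ _
        _ ≤ c * r + c' * (T * d) := add_le_add h1 hTA
        _ = c' * (s * d) := by rw [hs]; field_simp; ring
    exact absurd (le_csSup hbdd hsA) (not_le.mpr hsT)
  rw [hT1'] at hTA
  rw [hγ1, one_mul] at hTA
  exact hTA


private lemma key_step {X : Type*} [NormedAddCommGroup X] (D : Set X) (f : X → ℝ)
    (w : X) {c : ℝ≥0∞} (hc : c ≠ ⊤)
    (h : liminf (fun r : ℝ => ⨆ w' ∈ D ∩ ball w r,
        edist (f w') (f w) / ENNReal.ofReal r) (𝓝[>] (0:ℝ)) < c)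
    (δ : ℝ) (hδ : 0 < δ) :
    ∃ r, 0 < r ∧ r < δ ∧ ∀ w' ∈ D, dist w' w < r → dist (f w') (f w) ≤ c.toReal * r := by
  have hfreq : ∃ᶠ r in 𝓝[>] (0:ℝ), (⨆ w' ∈ D ∩ ball w r,
      edist (f w') (f w) / ENNReal.ofReal r) < c := frequently_lt_of_liminf_lt (by isBoundedDefault) h
  obtain ⟨r, hrI, hrlt⟩ := (hfreq.and_eventually (Ioo_mem_nhdsGT_of_mem ⟨le_rfl, hδ⟩)).exists
  refine ⟨r, hrlt.1, hrlt.2, ?_⟩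
  intro w' hw' hdw
  have h1 : edist (f w') (f w) / ENNReal.ofReal r < c := by
    refine lt_of_le_of_lt ?_ hrI
    exact le_iSup₂ (f := fun w' (_ : w' ∈ D ∩ ball w r) => edist (f w') (f w) / ENNReal.ofReal r) w' ⟨hw', mem_ball.mpr hdw⟩
  have hr0 : ENNReal.ofReal r ≠ 0 := (ENNReal.ofReal_pos.mpr hrlt.1).ne'
  have h2 : edist (f w') (f w) < c * ENNReal.ofReal r :=
    (ENNReal.div_lt_iff (Or.inl hr0) (Or.inl ENNReal.ofReal_ne_top)).mp h1
  have h3 : edist (f w') (f w) ≤ ENNReal.ofReal (c.toReal * r) := by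
    rw [ENNReal.ofReal_mul ENNReal.toReal_nonneg, ENNReal.ofReal_toReal hc]
    exact h2.le
  rw [edist_dist] at h3
  exact (ENNReal.ofReal_le_ofReal_iff (mul_nonneg ENNReal.toReal_nonneg hrlt.1.le)).mp h3

private lemma key_lemma {X : Type*} [NormedAddCommGroup X] [NormedSpace ℝ X]
    (D V : Set X) (f : X → ℝ) (hV : Convex ℝ V) (hVD : V ⊆ D) (K : ℝ≥0∞)
    (hK : ∀ w ∈ V, liminf (fun r : ℝ => ⨆ w' ∈ D ∩ ball w r,
        edist (f w') (f w) / ENNReal.ofReal r) (𝓝[>] (0:ℝ)) ≤ K)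
    {u v : X} (hu : u ∈ V) (hv : v ∈ V) :
    edist (f u) (f v) / edist u v ≤ K := by
  rcases eq_or_ne u v with rfl | huv
  · simp
  by_contra hlt
  push_neg at hlt
  obtain ⟨c1, hKc1, hc1a⟩ := exists_between hlt
  obtain ⟨c0, hKc0, hc0c1⟩ := exists_between hKc1
  have hc1top : c1 ≠ ⊤ := (hc1a.trans_le le_top).ne
  have hc0top : c0 ≠ ⊤ := (hc0c1.trans (lt_top_iff_ne_top.mpr hc1top)).ne
  have hc00 : (0:ℝ≥0∞) < c0 := lt_of_le_of_lt (zero_le : (0:ℝ≥0∞) ≤ K) hKc0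
  have hcR0 : 0 < c0.toReal := ENNReal.toReal_pos hc00.ne' hc0top
  have hcc' : c0.toReal < c1.toReal := (ENNReal.toReal_lt_toReal hc0top hc1top).mpr hc0c1
  have H : ∀ w ∈ V, ∀ δ : ℝ, 0 < δ → ∃ r, 0 < r ∧ r < δ ∧
      ∀ w' ∈ V, dist w' w < r → dist (f w') (f w) ≤ c0.toReal * r := by
    intro w hw δ hδ
    obtain ⟨r, h1, h2, h3⟩ := key_step D f w hc0top ((hK w hw).trans_lt hKc0) δ hδ
    exact ⟨r, h1, h2, fun w' hw' => h3 w' (hVD hw')⟩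
  have hchain : dist (f v) (f u) ≤ c1.toReal * dist u v :=
    chain_aux hV f hcR0 hcc' H hu hv
  have h4 : edist (f u) (f v) ≤ c1 * edist u v := by
    rw [edist_dist, edist_dist, dist_comm (f u) (f v)]
    calc ENNReal.ofReal (dist (f v) (f u)) ≤ ENNReal.ofReal (c1.toReal * dist u v) :=
          ENNReal.ofReal_le_ofReal hchain
      _ = ENNReal.ofReal c1.toReal * ENNReal.ofReal (dist u v) :=
          ENNReal.ofReal_mul ENNReal.toReal_nonneg
      _ = c1 * ENNReal.ofReal (dist u v) := by rw [ENNReal.ofReal_toReal hc1top]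
  have h5 : edist (f u) (f v) / edist u v ≤ c1 :=
    (ENNReal.div_le_iff (fun h => huv (edist_eq_zero.mp h)) (edist_ne_top u v)).mpr h4
  exact absurd h5 (not_le.mpr hc1a)

private lemma lip_le_Lip {X : Type*} [NormedAddCommGroup X] (D : Set X) (f : X → ℝ) (u : X) :
    liminf (fun r : ℝ => ⨆ w ∈ D ∩ ball u r,
        edist (f w) (f u) / ENNReal.ofReal r) (𝓝[>] (0:ℝ)) ≤
      limsup (fun w => edist (f w) (f u) / edist w u) (𝓝[(D \ {u})] u) := by
  by_contra h
  push_neg at h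
  obtain ⟨c, hc1, hc2⟩ := exists_between h
  have hev : ∀ᶠ w in 𝓝[(D \ {u})] u, edist (f w) (f u) / edist w u < c :=
    eventually_lt_of_limsup_lt hc1
  obtain ⟨δ, hδ, hsub⟩ := Metric.mem_nhdsWithin_iff.mp hev
  have hub : ∀ᶠ r in 𝓝[>] (0:ℝ), (⨆ w ∈ D ∩ ball u r,
      edist (f w) (f u) / ENNReal.ofReal r) ≤ c := by
    filter_upwards [Ioo_mem_nhdsGT_of_mem (Set.left_mem_Ico.mpr hδ)] with r hr
    refine iSup₂_le fun w hw => ?_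
    rcases eq_or_ne w u with rfl | hwu
    · simp
    have hwD : w ∈ D \ {u} := ⟨hw.1, hwu⟩
    have hdw : dist w u < δ := lt_trans (mem_ball.mp hw.2) hr.2
    have h1 : edist (f w) (f u) / edist w u < c := hsub ⟨mem_ball.mpr hdw, hwD⟩
    have hne0 : edist w u ≠ 0 := fun h => hwu (edist_eq_zero.mp h)
    have h2 : edist (f w) (f u) < c * edist w u :=
      (ENNReal.div_lt_iff (Or.inl hne0) (Or.inl (edist_ne_top w u))).mp h1
    have h3 : edist w u ≤ ENNReal.ofReal r := by
      rw [edist_dist]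
      exact ENNReal.ofReal_le_ofReal (mem_ball.mp hw.2).le
    have hr0 : ENNReal.ofReal r ≠ 0 := (ENNReal.ofReal_pos.mpr hr.1).ne'
    calc edist (f w) (f u) / ENNReal.ofReal r ≤ (c * ENNReal.ofReal r) / ENNReal.ofReal r := by
          apply ENNReal.div_le_div_right
          exact h2.le.trans (mul_le_mul_right h3 c)
      _ = c * (ENNReal.ofReal r / ENNReal.ofReal r) := by rw [mul_div_assoc]
      _ = c := by rw [ENNReal.div_self hr0 ENNReal.ofReal_ne_top, mul_one]
  have : liminf (fun r : ℝ => ⨆ w ∈ D ∩ ball u r,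
      edist (f w) (f u) / ENNReal.ofReal r) (𝓝[>] (0:ℝ)) ≤ c :=
    liminf_le_of_frequently_le' hub.frequently
  exact absurd this (not_le.mpr hc2)

theorem upperBaire_lip_eq_ILip {X : Type*} [NormedAddCommGroup X] [NormedSpace ℝ X]
    (D : Set X)
    (hD : ∀ x ∈ D, ∀ U ∈ 𝓝[D] x, ∃ V ∈ 𝓝[D] x, Convex ℝ V ∧ V ⊆ U ∧ V ⊆ D)
    (f : X → ℝ) :
    ∀ x ∈ D,
      (⨅ U ∈ 𝓝[D] x, ⨆ u ∈ U ∩ D,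
          liminf (fun r : ℝ => ⨆ w ∈ D ∩ ball u r,
            edist (f w) (f u) / ENNReal.ofReal r) (𝓝[>] (0:ℝ))) =
        (⨅ r ∈ Set.Ioi (0:ℝ), ⨆ u ∈ D ∩ ball x r, ⨆ v ∈ D ∩ ball x r,
          edist (f u) (f v) / edist u v) ∧
      (⨅ U ∈ 𝓝[D] x, ⨆ u ∈ U ∩ D,
          limsup (fun w => edist (f w) (f u) / edist w u) (𝓝[(D \ {u})] u)) =
        (⨅ r ∈ Set.Ioi (0:ℝ), ⨆ u ∈ D ∩ ball x r, ⨆ v ∈ D ∩ ball x r,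
          edist (f u) (f v) / edist u v) := by
  intro x hx
  set L : X → ℝ≥0∞ := fun u => liminf (fun r : ℝ => ⨆ w ∈ D ∩ ball u r,
      edist (f w) (f u) / ENNReal.ofReal r) (𝓝[>] (0:ℝ)) with hL
  set M : X → ℝ≥0∞ := fun u => limsup (fun w => edist (f w) (f u) / edist w u)
      (𝓝[(D \ {u})] u) with hM
  set S : ℝ → ℝ≥0∞ := fun r => ⨆ u ∈ D ∩ ball x r, ⨆ v ∈ D ∩ ball x r,
      edist (f u) (f v) / edist u v with hS
  have hLM : ∀ u, L u ≤ M u := fun u => lip_le_Lip D f u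
  have hAB : (⨅ U ∈ 𝓝[D] x, ⨆ u ∈ U ∩ D, L u) ≤ ⨅ U ∈ 𝓝[D] x, ⨆ u ∈ U ∩ D, M u := by
    refine iInf₂_mono fun U hU => iSup₂_mono fun u hu => hLM u
  have hBC : (⨅ U ∈ 𝓝[D] x, ⨆ u ∈ U ∩ D, M u) ≤ ⨅ r ∈ Set.Ioi (0:ℝ), S r := by
    refine le_iInf₂ fun r hr => ?_
    have hmem : ball x r ∈ 𝓝[D] x :=
      mem_nhdsWithin_of_mem_nhds (ball_mem_nhds x hr)
    refine iInf₂_le_of_le (ball x r) hmem (iSup₂_le fun u hu => ?_)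
    -- hu : u ∈ ball x r ∩ D
    refine limsup_le_of_le (by isBoundedDefault) ?_
    have hball : ball x r ∈ 𝓝 u := isOpen_ball.mem_nhds hu.1
    have hev2 : ∀ᶠ w in 𝓝[(D \ {u})] u, w ∈ ball x r :=
      eventually_of_mem (mem_nhdsWithin_of_mem_nhds hball) fun w hw => hw
    filter_upwards [eventually_mem_nhdsWithin, hev2] with w hw1 hw2
    exact le_iSup₂_of_le w ⟨hw1.1, hw2⟩ (le_iSup₂_of_le u ⟨hu.2, hu.1⟩ le_rfl)
  have hCA : (⨅ r ∈ Set.Ioi (0:ℝ), S r) ≤ ⨅ U ∈ 𝓝[D] x, ⨆ u ∈ U ∩ D, L u := by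
    refine le_iInf₂ fun U hU => ?_
    obtain ⟨V, hVmem, hVconv, hVU, hVD⟩ := hD x hx U hU
    obtain ⟨r, hr, hrV⟩ := Metric.mem_nhdsWithin_iff.mp hVmem
    refine le_trans (iInf₂_le r hr) ?_
    refine iSup₂_le fun u hu => iSup₂_le fun v hv => ?_
    have huV : u ∈ V := hrV ⟨hu.2, hu.1⟩
    have hvV : v ∈ V := hrV ⟨hv.2, hv.1⟩
    exact key_lemma D V f hVconv hVD (⨆ w ∈ U ∩ D, L w)
      (fun w hw => le_iSup₂ (f := fun w (_ : w ∈ U ∩ D) => L w) w ⟨hVU hw, hVD hw⟩) huV hvV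
  constructor
  · exact le_antisymm (hAB.trans hBC) hCA
  · exact le_antisymm hBC (hCA.trans hAB)
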